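/- Suppose (Δ_h, w_h) is a weighted exact abstraction of (Δ_l, w_l) relative to m, e is a low-level literal, and e is logically equivalent to m(m⁻¹(e)), where m⁻¹(e) is the disjunction of all high-level atoms p such that e is mentioned and pure in the CNF of m(p). Then for every high-level formula φ, Pr(φ | m⁻¹(e), Δ_h, w_h) = Pr(m(φ) | e, Δ_l, w_l). -/
import Mathlib


/-- Propositional formulas over atoms of type `α`. -/
inductive Form (α : Type) where
  | tru : Form α
  | atom : α → Form α
  | neg : Form α → Form α
  | conj : Form α → Form α → Form α
  | disj : Form α → Form α → Form α

/-- Truth value of a formula in a model `M : α → Bool`. -/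
def Form.eval {α : Type} (M : α → Bool) : Form α → Bool
  | .tru => true
  | .atom a => M a
  | .neg φ => !(φ.eval M)
  | .conj φ ψ => φ.eval M && ψ.eval M
  | .disj φ ψ => φ.eval M || ψ.eval M

/-- Homomorphic extension of a refinement mapping `m` on atoms to all formulas. -/
def Form.map {α β : Type} (m : α → Form β) : Form α → Form β
  | .tru => .tru
  | .atom a => m a
  | .neg φ => .neg (φ.map m)
  | .conj φ ψ => .conj (φ.map m) (ψ.map m)
  | .disj φ ψ => .disj (φ.map m) (ψ.map m)

/-- The set of atoms mentioned in a formula. -/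
def Form.atoms {α : Type} [DecidableEq α] : Form α → Finset α
  | .tru => ∅
  | .atom a => {a}
  | .neg φ => φ.atoms
  | .conj φ ψ => φ.atoms ∪ ψ.atoms
  | .disj φ ψ => φ.atoms ∪ ψ.atoms

/-- Weighted model count of `Δ` under literal weights `w` (`w a true` is the
weight of the positive literal on atom `a`, `w a false` of the negative one). -/
noncomputable def WMC {α : Type} [Fintype α] [DecidableEq α]
    (Δ : Form α) (w : α → Bool → ℝ) : ℝ :=
  ∑ M ∈ Finset.univ.filter (fun M : α → Bool => Δ.eval M = true), ∏ a, w a (M a)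

/-- `Pr(φ, Δ, w) = WMC(φ ∧ Δ, w) / WMC(Δ, w)`. -/
noncomputable def Pr {α : Type} [Fintype α] [DecidableEq α]
    (φ Δ : Form α) (w : α → Bool → ℝ) : ℝ :=
  WMC (Form.conj φ Δ) w / WMC Δ w

/-- `Mh` is `m`-isomorphic to `Ml`. -/
def Iso {α β : Type} (m : α → Form β) (Mh : α → Bool) (Ml : β → Bool) : Prop :=
  ∀ a : α, Mh a = (m a).eval Ml

/-- Conditional probability `Pr(φ | e, Δ, w) = WMC(φ∧e∧Δ,w)/WMC(e∧Δ,w)`. -/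
noncomputable def PrCond {α : Type} [Fintype α] [DecidableEq α]
    (φ e Δ : Form α) (w : α → Bool → ℝ) : ℝ :=
  WMC (Form.conj φ (Form.conj e Δ)) w / WMC (Form.conj e Δ) w

/-- A formula is a literal: an atom or a negated atom. -/
def Form.IsLit {α : Type} : Form α → Prop
  | .atom _ => True
  | .neg (.atom _) => True
  | _ => False

/-- A formula that is a disjunction of atoms. -/
def Form.IsAtomDisj {α : Type} : Form α → Prop
  | .atom _ => True
  | .disj φ ψ => φ.IsAtomDisj ∧ ψ.IsAtomDisj
  | _ => False


lemma WMC_congr {α : Type} [Fintype α] [DecidableEq α] (φ ψ : Form α)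
    (h : ∀ M : α → Bool, φ.eval M = ψ.eval M) (w : α → Bool → ℝ) :
    WMC φ w = WMC ψ w := by
  unfold WMC
  congr 1
  apply Finset.filter_congr
  intro M _
  simp [h M]

theorem stmt13 {α β : Type} [Fintype α] [DecidableEq α] [Fintype β] [DecidableEq β]
    (Δh : Form α) (Δl : Form β) (wh : α → Bool → ℝ) (wl : β → Bool → ℝ) (m : α → Form β)
    (e : Form β) (Eh : Form α)
    (hwh : ∀ a b, 0 ≤ wh a b) (hwl : ∀ a b, 0 ≤ wl a b)
    (hΔh : WMC Δh wh ≠ 0) (hΔl : WMC Δl wl ≠ 0)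
    (hsound : ∀ Ml : β → Bool, Δl.eval Ml = true →
      ∃ Mh : α → Bool, Δh.eval Mh = true ∧ Iso m Mh Ml)
    (hcomplete : ∀ Mh : α → Bool, Δh.eval Mh = true →
      ∃ Ml : β → Bool, Δl.eval Ml = true ∧ Iso m Mh Ml)
    (hexact : ∀ ψ : Form α, Pr ψ Δh wh = Pr (ψ.map m) Δl wl)
    (hlit : e.IsLit)
    -- `Eh` plays the role of the concretization `m⁻¹(e)`: a disjunction of
    -- high-level atoms whose image under `m` is logically equivalent to `e`.
    (hEh : Eh.IsAtomDisj)
    (hequiv : ∀ M : β → Bool, e.eval M = (Eh.map m).eval M)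
    (hce : WMC (Form.conj e Δl) wl ≠ 0)
    (hcEh : WMC (Form.conj Eh Δh) wh ≠ 0) :
    ∀ φ : Form α, PrCond φ Eh Δh wh = PrCond (φ.map m) e Δl wl := by
  intro φ
  have hA : WMC (Form.conj φ (Form.conj Eh Δh)) wh
      = WMC (Form.conj (Form.conj φ Eh) Δh) wh := by
    apply WMC_congr
    intro M
    simp [Form.eval, Bool.and_assoc]
  have hA' : WMC (Form.conj (φ.map m) (Form.conj e Δl)) wl
      = WMC (Form.conj ((Form.conj φ Eh).map m) Δl) wl := by
    apply WMC_congr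
    intro M
    simp [Form.eval, Form.map, hequiv M, Bool.and_assoc]
  have hB' : WMC (Form.conj e Δl) wl = WMC (Form.conj (Eh.map m) Δl) wl := by
    apply WMC_congr
    intro M
    simp [Form.eval, hequiv M]
  have h1 := hexact (Form.conj φ Eh)
  have h2 := hexact Eh
  unfold Pr at h1 h2
  unfold PrCond
  rw [hA, hA', hB']
  rw [hB'] at hce
  have hcEh' : WMC (Form.conj (Form.conj φ Eh) Δh) wh
      = WMC (Form.conj φ (Form.conj Eh Δh)) wh := hA.symm
  -- algebra
  set A := WMC (Form.conj (Form.conj φ Eh) Δh) wh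
  set B := WMC (Form.conj Eh Δh) wh
  set D := WMC Δh wh
  set A' := WMC (Form.conj ((Form.conj φ Eh).map m) Δl) wl
  set B' := WMC (Form.conj (Eh.map m) Δl) wl
  set D' := WMC Δl wl
  have e1 : A * D' = A' * D := by
    field_simp at h1
    linarith [h1]
  have e2 : B * D' = B' * D := by
    field_simp at h2
    linarith [h2]
  rw [div_eq_div_iff hcEh hce]
  have key : (A * D') * (B' * D) = (A' * D) * (B * D') := by rw [e1, e2]
  have : (A * B') * (D * D') = (A' * B) * (D * D') := by
    rw [show (A * B') * (D * D') = (A * D') * (B' * D) by ring, key]; ring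
  exact mul_right_cancel₀ (mul_ne_zero hΔh hΔl) this
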